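/- Let f_1, ..., f_m be real numbers, sorted so that f_σ(1) ≥ ... ≥ f_σ(m) for some permutation σ, and let 1 ≤ k ≤ m-1. Define g(t) := min { k·t + Σ_{j=1}^m r_j : r_j ≥ max(f_j − t, 0) for all j } = k·t + Σ_{j=1}^m max(f_j − t, 0). Then g is convex, and g attains its minimum value S_k = Σ_{j=1}^k f_σ(j) at every point t in the interval (f_σ(k+1), f_σ(k)]. -/

import Mathlib

lemma aux_convex_max (c : ℝ) : ConvexOn ℝ Set.univ (fun t => max (c - t) 0) := by
  refine ⟨convex_univ, ?_⟩
  intro x _ y _ a b ha hb hab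
  simp only [smul_eq_mul]
  have h : c - (a * x + b * y) = a * (c - x) + b * (c - y) := by linear_combination (-c) * hab
  rw [h]
  apply max_le
  · nlinarith [le_max_left (c - x) (0:ℝ), le_max_left (c - y) (0:ℝ),
      le_max_right (c - x) (0:ℝ), le_max_right (c - y) (0:ℝ)]
  · nlinarith [le_max_right (c - x) (0:ℝ), le_max_right (c - y) (0:ℝ)]

lemma aux_convex_lin (c : ℝ) : ConvexOn ℝ Set.univ (fun t : ℝ => c * t) := by
  refine ⟨convex_univ, ?_⟩
  intro x _ y _ a b ha hb hab
  simp only [smul_eq_mul]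
  nlinarith

lemma aux_convex_sum {ι : Type*} (s : Finset ι) (F : ι → ℝ → ℝ)
    (h : ∀ i ∈ s, ConvexOn ℝ Set.univ (F i)) :
    ConvexOn ℝ Set.univ (fun t => ∑ i ∈ s, F i t) := by
  classical
  induction s using Finset.induction_on with
  | empty => simpa using convexOn_const (0:ℝ) convex_univ
  | insert a s' hni ih =>
    simp only [Finset.sum_insert hni]
    exact (h a (Finset.mem_insert_self a s')).add
      (ih fun i hi => h i (Finset.mem_insert_of_mem hi))

lemma aux_sum_ite_const (m k : ℕ) (hkm : k ≤ m) (t : ℝ) :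
    ∑ j : Fin m, (if (j : ℕ) < k then t else 0) = k * t := by
  rw [Fin.sum_univ_eq_sum_range (fun j => if j < k then t else 0) m]
  rw [Finset.range_eq_Ico, ← Finset.sum_Ico_consecutive _ (Nat.zero_le k) hkm]
  rw [Finset.sum_congr rfl (fun i hi => if_pos (Finset.mem_Ico.mp hi).2),
      Finset.sum_congr rfl (g := fun _ => (0:ℝ)) (fun i hi => if_neg (by
        simpa using Nat.not_lt.mpr (Finset.mem_Ico.mp hi).1))]
  simp [mul_comm]

/-- For sorted f_σ(1) ≥ ... ≥ f_σ(m) and 1 ≤ k ≤ m-1, the function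
g(t) = k·t + ∑_j max(f_j − t, 0) is convex and attains its minimum value
S_k = ∑_{j=1}^k f_σ(j) at every t in the interval (f_σ(k+1), f_σ(k)]. -/
theorem stmt_3 (m k : ℕ) (hk1 : 1 ≤ k) (hkm : k < m) (f : Fin m → ℝ)
    (σ : Equiv.Perm (Fin m)) (hσ : ∀ i j : Fin m, i ≤ j → f (σ j) ≤ f (σ i)) :
    ConvexOn ℝ Set.univ (fun t : ℝ => k * t + ∑ j : Fin m, max (f j - t) 0) ∧
    ∀ t : ℝ, f (σ ⟨k, hkm⟩) < t → t ≤ f (σ ⟨k - 1, by omega⟩) →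
      ((k * t + ∑ j : Fin m, max (f j - t) 0)
          = ∑ j : Fin m, if (j : ℕ) < k then f (σ j) else 0) ∧
      (∀ t' : ℝ, (k * t + ∑ j : Fin m, max (f j - t) 0)
          ≤ k * t' + ∑ j : Fin m, max (f j - t') 0) := by
  have hreindex : ∀ t : ℝ, ∑ j : Fin m, max (f j - t) 0
      = ∑ j : Fin m, max (f (σ j) - t) 0 :=
    fun t => (Equiv.sum_comp σ (fun j => max (f j - t) 0)).symm
  -- lower bound: S_k ≤ g(t') for all t'
  have hlow : ∀ t' : ℝ, (∑ j : Fin m, if (j : ℕ) < k then f (σ j) else 0)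
      ≤ k * t' + ∑ j : Fin m, max (f j - t') 0 := by
    intro t'
    rw [hreindex t', ← aux_sum_ite_const m k hkm.le t', ← Finset.sum_add_distrib]
    apply Finset.sum_le_sum
    intro j _
    by_cases hj : (j : ℕ) < k
    · simp only [if_pos hj]
      nlinarith [le_max_left (f (σ j) - t') (0:ℝ)]
    · simp only [if_neg hj]
      nlinarith [le_max_right (f (σ j) - t') (0:ℝ)]
  constructor
  · exact (aux_convex_lin k).add (aux_convex_sum Finset.univ
      (fun j t => max (f j - t) 0) (fun j _ => aux_convex_max (f j)))
  · intro t ht1 ht2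
    have heq : (k * t + ∑ j : Fin m, max (f j - t) 0)
        = ∑ j : Fin m, if (j : ℕ) < k then f (σ j) else 0 := by
      rw [hreindex t]
      have hterm : ∀ j : Fin m, max (f (σ j) - t) 0
          = (if (j : ℕ) < k then f (σ j) else 0) - (if (j : ℕ) < k then t else 0) := by
        intro j
        by_cases hj : (j : ℕ) < k
        · simp only [if_pos hj]
          have hle : (⟨j, j.isLt⟩ : Fin m) ≤ ⟨k - 1, by omega⟩ := by
            simp [Fin.le_def]; omega
          have := hσ ⟨j, j.isLt⟩ ⟨k - 1, by omega⟩ hle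
          have : t ≤ f (σ j) := le_trans ht2 (by simpa using this)
          rw [max_eq_left (by linarith)]
        · simp only [if_neg hj]
          have hle : (⟨k, hkm⟩ : Fin m) ≤ ⟨j, j.isLt⟩ := by
            simp [Fin.le_def]; omega
          have := hσ ⟨k, hkm⟩ ⟨j, j.isLt⟩ hle
          have : f (σ j) < t := lt_of_le_of_lt (by simpa using this) ht1
          rw [max_eq_right (by linarith)]
          ring
      rw [Finset.sum_congr rfl (fun j _ => hterm j), Finset.sum_sub_distrib,
        aux_sum_ite_const m k hkm.le t]
      ring
    exact ⟨heq, fun t' => heq ▸ hlow t'⟩
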